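/- Let q be a nonzero integer and let L₀ ∈ ℂ with L₀ ∉ {0, 1, −1} satisfy A_{4_1}(L₀, L₀^{−q}) = 0, where A_{4_1}(L,M) = L²M⁴ + L(−M⁸ − 1 + M⁶ + M² + 2M⁴) + M⁴. Then the complex number 2(L₀^{q} + L₀^{−q} − 1) · L₀ · (L₀ − 1)^{−2} is an algebraic integer. -/

import Mathlib

open Polynomial

theorem dick_deg_le : ∀ n : ℕ, (dickson 1 (1:ℤ) n).degree ≤ n
  | 0 => by norm_num [dickson_zero]; exact degree_le_of_natDegree_le (by simp)
  | 1 => by simpa using degree_X_le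
  | (n+2) => by
    have h1 := dick_deg_le (n+1)
    have h0 := dick_deg_le n
    rw [dickson_add_two]
    refine le_trans (degree_sub_le _ _) ?_
    simp only [max_le_iff]
    constructor
    · refine le_trans (degree_mul_le _ _) ?_
      calc X.degree + (dickson 1 (1:ℤ) (n+1)).degree ≤ 1 + (n+1 : ℕ) := by
            exact add_le_add degree_X_le h1
        _ = ((n+2 : ℕ) : WithBot ℕ) := by push_cast; ring_nf
    · refine le_trans (degree_mul_le _ _) ?_
      calc (C (1:ℤ)).degree + (dickson 1 (1:ℤ) n).degree ≤ 0 + (n : ℕ) := by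
            exact add_le_add degree_C_le h0
        _ ≤ ((n+2 : ℕ) : WithBot ℕ) := by norm_num; norm_cast; omega

theorem dick_monic : ∀ n : ℕ, (dickson 1 (1:ℤ) (n+1)).Monic ∧ (dickson 1 (1:ℤ) (n+1)).degree = (n+1 : ℕ)
  | 0 => by simpa using ⟨monic_X, degree_X⟩
  | (n+1) => by
    obtain ⟨hm, hd⟩ := dick_monic n
    rw [show n+1+1 = n+2 from rfl, dickson_add_two]
    have hXm : (X * dickson 1 (1:ℤ) (n+1)).Monic := monic_X.mul hm
    have hXd : (X * dickson 1 (1:ℤ) (n+1)).degree = ((n+2 : ℕ) : WithBot ℕ) := by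
      rw [degree_mul, degree_X, hd]; push_cast; ring_nf
    have hlt : (C (1:ℤ) * dickson 1 (1:ℤ) n).degree < (X * dickson 1 (1:ℤ) (n+1)).degree := by
      rw [hXd]
      refine lt_of_le_of_lt (degree_mul_le _ _) ?_
      refine lt_of_le_of_lt (add_le_add degree_C_le (dick_deg_le n)) ?_
      norm_num; norm_cast; omega
    exact ⟨hXm.sub_of_left hlt, by rw [degree_sub_eq_left_of_degree_lt hlt, hXd]⟩

-- ℤ-side package for a given m (n = m+1 ≥ 1)
section IntSide
variable (m : ℕ)

noncomputable def Dm : ℤ[X] := dickson 1 1 (m+1)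
noncomputable def Qm : ℤ[X] := (Dm m)^4 - C 5 * (Dm m)^2 - X + C 2
noncomputable def Qtm : ℤ[X] := Qm m /ₘ (X - C (-2))

theorem Qm_monic : (Qm m).Monic := by
  obtain ⟨hm, hd⟩ := dick_monic m
  have h4 : ((Dm m)^4).Monic := hm.pow 4
  have h4d : ((Dm m)^4).degree = ((4*(m+1) : ℕ) : WithBot ℕ) := by
    rw [degree_pow, Dm, hd]; push_cast; ring_nf
  have : (- (C 5 * (Dm m)^2) - X + C 2).degree < ((Dm m)^4).degree := by
    rw [h4d]
    refine lt_of_le_of_lt (degree_add_le _ _) ?_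
    simp only [max_lt_iff]
    refine ⟨lt_of_le_of_lt (degree_sub_le _ _) ?_, ?_⟩
    · simp only [max_lt_iff, degree_neg]
      constructor
      · refine lt_of_le_of_lt (degree_mul_le _ _) ?_
        refine lt_of_le_of_lt (add_le_add degree_C_le (degree_pow_le_of_le 2 (dick_deg_le (m+1)))) ?_
        norm_num; norm_cast; omega
      · rw [degree_X]; norm_cast; omega
    · refine lt_of_le_of_lt degree_C_le ?_; norm_cast; omega
  have := h4.add_of_left this
  have e : (Dm m)^4 + (- (C 5 * (Dm m)^2) - X + C 2) = Qm m := by rw [Qm]; ring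
  rwa [e] at this

theorem Dm_eval_neg_two : (Dm m).eval (-2) = 2 * (-1:ℤ)^(m+1) := by
  have := dickson_one_one_eval_add_inv (-1:ℤ) (-1) (by norm_num) (m+1)
  rw [Dm]; norm_num at this ⊢; rw [this]; ring

theorem Dm_eval_two : (Dm m).eval 2 = 2 := by
  have := dickson_one_one_eval_add_inv (1:ℤ) 1 (by norm_num) (m+1)
  rw [Dm]; norm_num at this ⊢; rw [this]

theorem Qm_root : (Qm m).IsRoot (-2) := by
  have h := Dm_eval_neg_two m
  have hsq : ((Dm m).eval (-2))^2 = 4 := by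
    rw [h]; rw [mul_pow, ← pow_mul, mul_comm (m+1) 2, pow_mul]; norm_num
  have h4 : ((Dm m).eval (-2))^4 = 16 := by
    rw [show (4:ℕ) = 2*2 from rfl, pow_mul, hsq]; norm_num
  simp only [IsRoot, Qm, eval_add, eval_sub, eval_mul, eval_pow, eval_C, eval_X, h4, hsq]
  ring

theorem Qm_fac : (X - C (-2)) * Qtm m = Qm m :=
  mul_divByMonic_eq_iff_isRoot.mpr (Qm_root m)

theorem Qtm_eval_two : (Qtm m).eval 2 = -1 := by
  have h := congrArg (eval 2) (Qm_fac m)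
  simp only [eval_mul, eval_sub, eval_X, eval_C] at h
  have h2 : (Qm m).eval 2 = -4 := by
    simp only [Qm, eval_add, eval_sub, eval_mul, eval_pow, eval_C, eval_X, Dm_eval_two]
    norm_num
  rw [h2] at h
  linarith

noncomputable def Wm : ℤ[X] := (Qtm m).comp (X + C 2)

theorem Wm_coeff_zero : (Wm m).coeff 0 = -1 := by
  rw [coeff_zero_eq_eval_zero, Wm, eval_comp]
  simpa using Qtm_eval_two m

noncomputable def Vm : ℤ[X] := (Wm m + C 1) /ₘ (X - C 0)

theorem Vm_fac : Wm m + C 1 = X * Vm m := by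
  have : (Wm m + C 1).IsRoot 0 := by
    simp [IsRoot, ← coeff_zero_eq_eval_zero, Wm_coeff_zero m]
  have h := mul_divByMonic_eq_iff_isRoot.mpr this
  rw [Vm, show (X:ℤ[X]) * ((Wm m + C 1) /ₘ (X - C 0)) = (X - C 0) * ((Wm m + C 1) /ₘ (X - C 0)) by
    rw [C_0, sub_zero], h]
end IntSide

theorem Qm_def (m : ℕ) : Qm m = (Dm m)^4 - C 5 * (Dm m)^2 - X + C 2 := rfl
theorem Dm_def (m : ℕ) : Dm m = dickson 1 1 (m+1) := rfl
theorem Wm_def (m : ℕ) : Wm m = (Qtm m).comp (X + C 2) := rfl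


/-- The A-polynomial of the figure-eight knot, as a function on `ℂ × ℂ`. -/
noncomputable def A41 (L M : ℂ) : ℂ :=
  L ^ 2 * M ^ 4 + L * (-M ^ 8 - 1 + M ^ 6 + M ^ 2 + 2 * M ^ 4) + M ^ 4

/-- Theorem 1.1, case `p = 1`: the Reidemeister torsion of `1/q`-surgery on the
figure-eight knot is an algebraic integer. -/
theorem torsion_one_over_q_surgery_isIntegral (q : ℤ) (hq : q ≠ 0) (L₀ : ℂ)
    (h0 : L₀ ≠ 0) (h1 : L₀ ≠ 1) (h2 : L₀ ≠ -1)
    (hA : A41 L₀ (L₀ ^ (-q)) = 0) :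
    IsIntegral ℤ (2 * (L₀ ^ q + L₀ ^ (-q) - 1) * L₀ * ((L₀ - 1) ^ 2)⁻¹) := by
  obtain ⟨m, hn⟩ : ∃ m : ℕ, q.natAbs = m + 1 :=
    ⟨q.natAbs - 1, (Nat.succ_pred_eq_of_pos (Int.natAbs_pos.mpr hq)).symm⟩
  set M : ℂ := L₀ ^ (-q) with hM
  have hM0 : M ≠ 0 := zpow_ne_zero _ h0
  have hML : M * L₀ ^ q = 1 := by rw [hM, ← zpow_add₀ h0]; simp
  have hq' : L₀ ^ q = M⁻¹ := eq_inv_of_mul_eq_one_right hML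
  set y : ℂ := L₀ ^ q + L₀ ^ (-q) with hy
  set t : ℂ := L₀ + L₀⁻¹ with ht
  have hyM : y = M⁻¹ + M := by rw [hy, hq', hM]
  -- Step 1: t = y^4 - 5 y^2 + 2
  have E1 : t = y^4 - 5*y^2 + 2 := by
    rw [ht, hyM]
    unfold A41 at hA
    field_simp
    linear_combination hA
  -- Step 2: aeval t (Dm m) = y
  have hyD : aeval t (Dm m) = y := by
    have hmap : aeval t (Dm m) = eval t (dickson 1 (1:ℂ) (m+1)) := by
      rw [aeval_def, eval₂_eq_eval_map, Dm_def, map_dickson]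
      norm_num
    rw [hmap, ht, dickson_one_one_eval_add_inv L₀ L₀⁻¹ (mul_inv_cancel₀ h0)]
    have hna : ((m+1 : ℕ) : ℤ) = q ∨ ((m+1 : ℕ) : ℤ) = -q := by
      rcases Int.natAbs_eq q with h | h
      · left; rw [← hn, ← h]
      · right; rw [← hn]; omega
    have e1 : L₀ ^ (m+1 : ℕ) = L₀ ^ ((m+1 : ℕ) : ℤ) := (zpow_natCast _ _).symm
    have e2 : (L₀⁻¹) ^ (m+1 : ℕ) = L₀ ^ (-((m+1 : ℕ) : ℤ)) := by
      rw [inv_pow, ← zpow_natCast, ← zpow_neg]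
    rcases hna with h | h
    · rw [e1, e2, h, hy]
    · rw [e1, e2, h, hy, neg_neg, add_comm]
  -- Step 3: t is an algebraic integer
  have hQ0 : aeval t (Qm m) = 0 := by
    rw [Qm_def]
    simp only [map_add, map_sub, map_mul, map_pow, aeval_X, aeval_C, algebraMap_int_eq,
      eq_intCast, map_ofNat]
    rw [hyD]
    push_cast
    linear_combination -E1
  have ht_int : IsIntegral ℤ t := ⟨Qm m, Qm_monic m, by rw [← aeval_def]; exact hQ0⟩
  have ht2 : t ≠ -2 := by
    intro h
    apply h2
    have hL : L₀ + L₀⁻¹ = -2 := by rw [← ht, h]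
    have : (L₀ + 1)^2 = 0 := by
      have h' : L₀ * (L₀ + L₀⁻¹) = L₀ * (-2) := by rw [hL]
      field_simp at h'
      linear_combination h'
    have := pow_eq_zero_iff (n := 2) (by norm_num) |>.mp this
    exact eq_neg_of_add_eq_zero_left this
  -- Step 4: Qt vanishes at t
  have hQt0 : aeval t (Qtm m) = 0 := by
    have h := congrArg (aeval t) (Qm_fac m)
    simp only [map_mul, map_sub, aeval_X, aeval_C, algebraMap_int_eq, eq_intCast, map_intCast] at h
    rw [hQ0] at h
    have hne : t - ((-2 : ℤ) : ℂ) ≠ 0 := by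
      push_cast
      intro hz
      exact ht2 (by linear_combination hz)
    rcases mul_eq_zero.mp h with h' | h'
    · exact absurd h' hne
    · exact h'
  -- Step 5: u := t - 2 satisfies W, and u * V(u) = 1
  set u : ℂ := t - 2 with hu
  have hWu : aeval u (Wm m) = 0 := by
    rw [Wm_def, aeval_comp]
    have : aeval u (X + C 2 : ℤ[X]) = t := by
      simp only [map_add, aeval_X, aeval_C, algebraMap_int_eq, eq_intCast, map_intCast, map_ofNat]
      push_cast
      rw [hu]; ring
    rw [this]
    exact hQt0
  have huV : u * aeval u (Vm m) = 1 := by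
    have h := congrArg (aeval u) (Vm_fac m)
    simp only [map_add, map_mul, aeval_X, map_one] at h
    rw [hWu, zero_add] at h
    exact h.symm
  -- Step 6: integrality
  have h2int : IsIntegral ℤ (2 : ℂ) := by
    simpa using isIntegral_algebraMap (R := ℤ) (A := ℂ) (x := (2 : ℤ))
  have hu_int : IsIntegral ℤ u := ht_int.sub h2int
  have hV_int : IsIntegral ℤ (aeval u (Vm m)) :=
    IsIntegral.of_mem_of_fg (Algebra.adjoin ℤ {u}) hu_int.fg_adjoin_singleton _
      (aeval_mem_adjoin_singleton ℤ u)
  have hy_int : IsIntegral ℤ y := by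
    rw [← hyD]
    exact IsIntegral.of_mem_of_fg (Algebra.adjoin ℤ {t}) ht_int.fg_adjoin_singleton _
      (aeval_mem_adjoin_singleton ℤ t)
  -- Step 7: identify the torsion with 2 (y - 1) V(u)
  have hu0 : u ≠ 0 := by
    intro h
    rw [h, zero_mul] at huV
    exact zero_ne_one huV
  have hL1 : L₀ - 1 ≠ 0 := sub_ne_zero.mpr h1
  have hsq : (L₀ - 1) ^ 2 = u * L₀ := by
    rw [hu, ht]
    field_simp
    ring
  have hgoal : 2 * (L₀ ^ q + L₀ ^ (-q) - 1) * L₀ * ((L₀ - 1) ^ 2)⁻¹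
      = 2 * (y - 1) * aeval u (Vm m) := by
    have hVinv : aeval u (Vm m) = u⁻¹ := eq_inv_of_mul_eq_one_right huV
    rw [← hy, hsq, mul_inv, hVinv]
    field_simp
  rw [hgoal]
  exact (h2int.mul (hy_int.sub isIntegral_one)).mul hV_int
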